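/- Let σ be an m×n matrix, μ ∈ ℝ^m, with GOP solution (π*, λ*) of σσᵀπ* + λ*1 = μ, 1ᵀπ* = 1, and θ = σᵀπ*. Extend the market by a security with drift α ∈ ℝ and volatility vector β ∈ ℝ^n. If β = σᵀx* for some x* with 1ᵀx* = 1 and a GOP exists for the extended market, then necessarily α = λ* + βᵀθ, and the extended GOP weights are (π*, 0) (no position in the new security changes the GOP). -/

import Mathlib

open Matrix

/-- Market extension theorem (replicable case).  Let `(π*, λ*)` solve the GOP
first-order conditions `σσᵀπ* + λ*·1 = μ`, `1ᵀπ* = 1`, with `θ = σᵀπ*`.  Extend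
the market by a security with drift `α` and volatility vector `β`.  If `β = σᵀx*`
for some fully invested `x*` (`1ᵀx* = 1`) and a GOP exists for the extended market
(i.e. the extended first-order conditions are solvable), then necessarily
`α = λ* + βᵀθ`, and the extended GOP weights are `(π*, 0)` with the same `λ*`:
no position in the new security is needed. -/
theorem market_extension_replicable (m n : ℕ) (σ : Matrix (Fin m) (Fin n) ℝ)
    (μ πs xs : Fin m → ℝ) (lams α : ℝ) (β : Fin n → ℝ)
    (σ' : Matrix (Fin m ⊕ Unit) (Fin n) ℝ)
    (hσ' : σ' = Matrix.fromRows σ (Matrix.of fun _ j => β j))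
    (h1 : (σ * σᵀ).mulVec πs + lams • (fun _ => (1 : ℝ)) = μ)
    (h2 : πs ⬝ᵥ (fun _ => (1 : ℝ)) = 1)
    (hβ : β = σᵀ.mulVec xs)
    (hx : xs ⬝ᵥ (fun _ => (1 : ℝ)) = 1)
    (hGOPext : ∃ (π' : Fin m ⊕ Unit → ℝ) (l : ℝ),
      (σ' * σ'ᵀ).mulVec π' + l • (fun _ => (1 : ℝ)) = Sum.elim μ (fun _ => α) ∧
      π' ⬝ᵥ (fun _ => (1 : ℝ)) = 1) :
    α = lams + β ⬝ᵥ (σᵀ.mulVec πs) ∧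
    ((σ' * σ'ᵀ).mulVec (Sum.elim πs (fun _ => 0)) + lams • (fun _ => (1 : ℝ)) =
        Sum.elim μ (fun _ => α) ∧
      (Sum.elim πs (fun _ => (0 : ℝ))) ⬝ᵥ (fun _ : Fin m ⊕ Unit => (1 : ℝ)) = 1) := by
  obtain ⟨π', l, he, hs⟩ := hGOPext
  set B : Matrix Unit (Fin n) ℝ := Matrix.of fun _ j => β j with hB
  -- decompose π'
  set p : Fin m → ℝ := fun i => π' (Sum.inl i) with hp
  set c : ℝ := π' (Sum.inr ()) with hc
  have hπ' : π' = Sum.elim p (fun _ => c) := by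
    funext x; cases x with
    | inl i => rfl
    | inr u => cases u; rfl
  -- general computation of σ' * σ'ᵀ *ᵥ (Sum.elim v (fun _ => t))
  have key : ∀ (v : Fin m → ℝ) (t : ℝ),
      (σ' * σ'ᵀ).mulVec (Sum.elim v (fun _ => t)) =
        Sum.elim (σ.mulVec (σᵀ.mulVec v + t • β))
          (fun _ => β ⬝ᵥ (σᵀ.mulVec v + t • β)) := by
    intro v t
    have hBT : Bᵀ.mulVec (fun _ : Unit => t) = t • β := by
      funext j
      simp [Matrix.mulVec, dotProduct, hB, mul_comm]
    rw [← Matrix.mulVec_mulVec, hσ', Matrix.transpose_fromRows,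
      Matrix.fromCols_mulVec_sumElim, hBT, Matrix.fromRows_mulVec]
    funext x; cases x with
    | inl i => rfl
    | inr u => simp [hB, Matrix.mulVec, dotProduct]
  set θ' : Fin n → ℝ := σᵀ.mulVec p + c • β with hθ'
  have he' : Sum.elim (σ.mulVec θ' + lams • (fun _ => (1:ℝ)) - lams • (fun _ => (1:ℝ)) + l • (fun _ => (1:ℝ)))
      (fun _ : Unit => β ⬝ᵥ θ' + l) = Sum.elim μ (fun _ : Unit => α) := by
    rw [← he, hπ', key]
    funext x; cases x with
    | inl i => simp [Pi.add_apply, hθ']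
    | inr u => simp [hθ', dotProduct_add, dotProduct_smul]
  have hA : σ.mulVec θ' + l • (fun _ => (1:ℝ)) = μ := by
    funext i
    have := congrFun he' (Sum.inl i)
    simpa using this
  have hBe : β ⬝ᵥ θ' + l = α := by
    have := congrFun he' (Sum.inr ())
    simpa using this
  -- dot with xs: xs ⬝ᵥ (σ *ᵥ w) = β ⬝ᵥ w
  have hdot : ∀ w : Fin n → ℝ, xs ⬝ᵥ σ.mulVec w = β ⬝ᵥ w := by
    intro w
    rw [hβ, Matrix.mulVec_transpose, Matrix.dotProduct_mulVec]
  have hα : α = xs ⬝ᵥ μ := by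
    have := congrArg (fun v => xs ⬝ᵥ v) hA
    simp only [dotProduct_add, dotProduct_smul, hx, smul_eq_mul, mul_one,
      hdot θ'] at this
    linarith [hBe]
  -- original FOC dotted with xs
  have h1' : σ.mulVec (σᵀ.mulVec πs) + lams • (fun _ => (1:ℝ)) = μ := by
    rw [← Matrix.mulVec_mulVec] at h1; exact h1
  have hlam : β ⬝ᵥ (σᵀ.mulVec πs) + lams = xs ⬝ᵥ μ := by
    have := congrArg (fun v => xs ⬝ᵥ v) h1'
    simp only [dotProduct_add, dotProduct_smul, hx, smul_eq_mul, mul_one,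
      hdot (σᵀ.mulVec πs)] at this
    linarith
  have hmain : α = lams + β ⬝ᵥ (σᵀ.mulVec πs) := by rw [hα, ← hlam]; ring
  refine ⟨hmain, ?_, ?_⟩
  · rw [key πs 0]
    funext x; cases x with
    | inl i =>
      have := congrFun h1' i
      simpa using this
    | inr u =>
      simp [hmain]
      ring
  · simpa [dotProduct, Fintype.sum_sum_type] using h2
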